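/- Relative GL-invariance: for A_i ∈ GL(n_i) and any balanced table T of degree M, Δ_T((A_1,…,A_d)·X) = det(A_1)^{M/n_1} ⋯ det(A_d)^{M/n_d} · Δ_T(X). In particular Δ_T is invariant under SL(n_1)×⋯×SL(n_d). -/
import Mathlib


open scoped Classical

/-- Sign contribution of one row `t` of a balanced table with `K` blocks: the product, over
the blocks of positions carrying equal entry `v ∈ {0,…,K−1}`, of the sign of the sequence of
`σ`-values read along the block in increasing position order (`0` if this sequence is not a
permutation of `[n_i]`); the sign of a permutation is computed as `(−1)^inversions`. -/
noncomputable def rowSgn (M ni K : ℕ) (t : Fin M → ℕ) (σ : Fin M → Fin ni) : ℤ :=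
  ∏ v ∈ Finset.range K,
    if ∀ x : Fin ni, ∃! p : Fin M, t p = v ∧ σ p = x then
      (-1 : ℤ) ^ Set.ncard {pq : Fin M × Fin M |
        pq.1 < pq.2 ∧ t pq.1 = v ∧ t pq.2 = v ∧ σ pq.2 < σ pq.1}
    else 0

/-- The invariant polynomial `Δ_T` of a `d × M` balanced table `T` (with entries of row `i`
in `{0,…,M/n_i − 1}`), as a function of hypermatrices `X` of format `n_1 × ⋯ × n_d`:
`Δ_T(X) = Σ_{σ_1,…,σ_d} ∏_i sgn_{T_i}(σ_i) · ∏_{p=1}^M X_{σ_1(p),…,σ_d(p)}`. -/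
noncomputable def Delta (d M : ℕ) (n : Fin d → ℕ) (T : Fin d → Fin M → ℕ)
    (X : ((i : Fin d) → Fin (n i)) → ℂ) : ℂ :=
  ∑ σ : (i : Fin d) → Fin M → Fin (n i),
    ((∏ i, rowSgn M (n i) (M / n i) (T i) (σ i) : ℤ) : ℂ) *
      ∏ p : Fin M, X fun i => σ i p

/-- `T` is a `d × M` balanced table for the format `n`: row `i` has entries in
`{0,…,M/n_i − 1}` and contains each such value exactly `n i` times. -/
def IsBalanced (d M : ℕ) (n : Fin d → ℕ) (T : Fin d → Fin M → ℕ) : Prop :=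
  ∀ i : Fin d, (∀ p, T i p < M / n i) ∧
    ∀ v : ℕ, v < M / n i → Set.ncard {p : Fin M | T i p = v} = n i

namespace DeltaInv

noncomputable def blockSgn (n : ℕ) (g : Fin n → Fin n) : ℤ :=
  if h : Function.Bijective g then (Equiv.Perm.sign (Equiv.ofBijective g h) : ℤ) else 0

lemma signAux_eq_sign {n : ℕ} (π : Equiv.Perm (Fin n)) :
    Equiv.Perm.signAux π = Equiv.Perm.sign π := by
  rcases le_or_gt 2 n with h | h
  · have hsurj : Function.Surjective
        (MonoidHom.mk' Equiv.Perm.signAux Equiv.Perm.signAux_mul :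
          Equiv.Perm (Fin n) →* ℤˣ) := by
      intro u
      rcases Int.units_eq_one_or u with rfl | rfl
      · exact ⟨1, Equiv.Perm.signAux_one n⟩
      · refine ⟨Equiv.swap ⟨0, by omega⟩ ⟨1, by omega⟩, Equiv.Perm.signAux_swap ?_⟩
        simp [Fin.ext_iff]
    exact DFunLike.congr_fun (Equiv.Perm.eq_sign_of_surjective_hom hsurj) π
  · have hs : Subsingleton (Fin n) := ⟨fun a b => Fin.ext (by have := a.isLt; have := b.isLt; omega)⟩
    have hπ : π = 1 := Equiv.ext fun x => Subsingleton.elim _ _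
    subst hπ
    simp [Equiv.Perm.signAux_one]

lemma inversions_sign {n : ℕ} (g : Fin n → Fin n) :
    (if ∀ x : Fin n, ∃! k : Fin n, g k = x then
        (-1 : ℤ) ^ Set.ncard {kl : Fin n × Fin n | kl.1 < kl.2 ∧ g kl.2 < g kl.1}
      else 0) = blockSgn n g := by
  by_cases h : Function.Bijective g
  · rw [if_pos ((Function.bijective_iff_existsUnique g).1 h)]
    rw [blockSgn, dif_pos h]
    set π := Equiv.ofBijective g h with hπ
    rw [← signAux_eq_sign]
    have h1 : ((Equiv.Perm.signAux π : ℤˣ) : ℤ)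
        = ∏ x ∈ Equiv.Perm.finPairsLT n, (if π x.1 ≤ π x.2 then (-1 : ℤ) else 1) := by
      rw [Equiv.Perm.signAux]
      push_cast
      exact Finset.prod_congr rfl fun x _ => by split <;> simp
    rw [h1, Finset.prod_ite, Finset.prod_const, Finset.prod_const, one_pow, mul_one]
    congr 1
    rw [Set.ncard_eq_toFinset_card']
    refine Finset.card_bij (fun kl _ => ⟨kl.2, kl.1⟩) ?_ ?_ ?_
    · intro kl hkl
      simp only [Set.mem_toFinset, Set.mem_setOf_eq] at hkl
      simp only [Finset.mem_filter, Equiv.Perm.mem_finPairsLT]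
      exact ⟨hkl.1, le_of_lt hkl.2⟩
    · intro a ha b hb hab
      simp only [Sigma.mk.inj_iff, heq_eq_eq] at hab
      exact Prod.ext hab.2 hab.1
    · intro x hx
      simp only [Finset.mem_filter, Equiv.Perm.mem_finPairsLT] at hx
      refine ⟨(x.2, x.1), ?_, rfl⟩
      simp only [Set.mem_toFinset, Set.mem_setOf_eq]
      refine ⟨hx.1, lt_of_le_of_ne hx.2 ?_⟩
      intro hcon
      exact absurd (h.injective hcon) (ne_of_gt hx.1)
  · rw [blockSgn, dif_neg h, if_neg]
    intro hc
    exact h ((Function.bijective_iff_existsUnique g).2 hc)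

lemma blockSgn_perm {n : ℕ} (π : Equiv.Perm (Fin n)) :
    blockSgn n ⇑π = (Equiv.Perm.sign π : ℤ) := by
  rw [blockSgn, dif_pos π.bijective]
  have h : Equiv.ofBijective ⇑π π.bijective = π := Equiv.ext fun x => rfl
  rw [h]

lemma det_expansion {n : ℕ} (A : Matrix (Fin n) (Fin n) ℂ) (g : Fin n → Fin n) :
    ∑ f : Fin n → Fin n, (blockSgn n f : ℂ) * ∏ k, A (f k) (g k)
      = A.det * (blockSgn n g : ℂ) := by
  have h1 : ∑ f : Fin n → Fin n, (blockSgn n f : ℂ) * ∏ k, A (f k) (g k)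
      = ∑ π : Equiv.Perm (Fin n), ((Equiv.Perm.sign π : ℤ) : ℂ) * ∏ k, A (π k) (g k) := by
    rw [← Finset.sum_filter_of_ne
      (p := fun f : Fin n → Fin n => Function.Bijective f) (s := Finset.univ)
      (f := fun f => (blockSgn n f : ℂ) * ∏ k, A (f k) (g k))]
    · refine (Finset.sum_bij (fun (π : Equiv.Perm (Fin n)) _ => (π : Fin n → Fin n)) ?_ ?_ ?_ ?_).symm
      · intro π _
        exact Finset.mem_filter.2 ⟨Finset.mem_univ _, π.bijective⟩
      · intro a _ b _ hab
        exact Equiv.coe_fn_injective hab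
      · intro f hf
        simp only [Finset.mem_filter] at hf
        exact ⟨Equiv.ofBijective f hf.2, Finset.mem_univ _, rfl⟩
      · intro π _
        rw [blockSgn_perm]
    · intro f _ hne
      by_contra hb
      apply hne
      rw [blockSgn, dif_neg hb]
      simp
  rw [h1]
  have h2 : ∀ π : Equiv.Perm (Fin n),
      ∏ k, A (π k) (g k) = ∏ k, (A.submatrix id g) (π k) k := by
    intro π; rfl
  have h3 : ∑ π : Equiv.Perm (Fin n), ((Equiv.Perm.sign π : ℤ) : ℂ) * ∏ k, A (π k) (g k)
      = (A.submatrix id g).det := by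
    rw [Matrix.det_apply]
    refine Finset.sum_congr rfl fun π _ => ?_
    rw [h2 π, Units.smul_def, zsmul_eq_mul]
  rw [h3]
  by_cases hb : Function.Bijective g
  · have : g = ⇑(Equiv.ofBijective g hb) := rfl
    rw [blockSgn, dif_pos hb]
    conv_lhs => rw [this]
    rw [Matrix.det_permute' (Equiv.ofBijective g hb) A]
    ring
  · rw [blockSgn, dif_neg hb]
    have : ¬ Function.Injective g := fun hi => hb ⟨hi, Finite.surjective_of_injective hi⟩
    rw [Function.not_injective_iff] at this
    obtain ⟨a, b, hgab, hab⟩ := this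
    rw [Matrix.det_zero_of_column_eq hab (fun k => by simp [Matrix.submatrix_apply, hgab])]
    simp

lemma row_lemma (M n K : ℕ) (t : Fin M → ℕ)
    (ht1 : ∀ p, t p < K) (ht2 : ∀ v, v < K → Set.ncard {p : Fin M | t p = v} = n)
    (A : Matrix (Fin n) (Fin n) ℂ) (τ : Fin M → Fin n) :
    ∑ σ : Fin M → Fin n, ((rowSgn M n K t σ : ℤ) : ℂ) * ∏ p, A (σ p) (τ p)
      = A.det ^ K * ((rowSgn M n K t τ : ℤ) : ℂ) := by
  classical
  set F : Fin K → Finset (Fin M) := fun v => Finset.univ.filter fun p => t p = v.val with hFdef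
  have hF : ∀ v : Fin K, (F v).card = n := by
    intro v
    have h := ht2 v.val v.isLt
    rw [Set.ncard_eq_toFinset_card'] at h
    rw [← h]
    congr 1
    ext p
    simp [hFdef]
  set e : Fin K → Fin n → Fin M := fun v k => ((F v).orderIsoOfFin (hF v) k : Fin M) with hedef
  have he1 : ∀ v k, t (e v k) = v.val := by
    intro v k
    have h : e v k ∈ F v := ((F v).orderIsoOfFin (hF v) k).2
    rw [hFdef] at h
    exact (Finset.mem_filter.1 h).2
  have he2 : ∀ v, StrictMono (e v) := by
    intro v a b hab
    exact Subtype.coe_lt_coe.2 (((F v).orderIsoOfFin (hF v)).lt_iff_lt.2 hab)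
  have heu : ∀ (v : Fin K) (p : Fin M), t p = v.val → ∃ k, e v k = p := by
    intro v p hp
    have hmem : p ∈ F v := by simp [hFdef, hp]
    exact ⟨((F v).orderIsoOfFin (hF v)).symm ⟨p, hmem⟩,
      congrArg Subtype.val (((F v).orderIsoOfFin (hF v)).apply_symm_apply ⟨p, hmem⟩)⟩
  have hfact : ∀ σ : Fin M → Fin n,
      rowSgn M n K t σ = ∏ v : Fin K, blockSgn n (fun k => σ (e v k)) := by
    intro σ
    rw [rowSgn, ← Fin.prod_univ_eq_prod_range]
    refine Finset.prod_congr rfl fun v _ => ?_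
    rw [← inversions_sign (fun k => σ (e v k))]
    have hiff : (∀ x : Fin n, ∃! p : Fin M, t p = ↑v ∧ σ p = x)
        ↔ (∀ x : Fin n, ∃! k : Fin n, σ (e v k) = x) := by
      constructor
      · intro hcc x
        obtain ⟨p, ⟨hp1, hp2⟩, hup⟩ := hcc x
        obtain ⟨k, hk⟩ := heu v p hp1
        refine ⟨k, by show σ (e v k) = x; rw [hk]; exact hp2, ?_⟩
        intro k' hk'
        have h : e v k' = p := hup (e v k') ⟨he1 v k', hk'⟩
        exact (he2 v).injective (h.trans hk.symm)
      · intro hc x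
        obtain ⟨k, hk, huk⟩ := hc x
        refine ⟨e v k, ⟨he1 v k, hk⟩, ?_⟩
        rintro q ⟨hq1, hq2⟩
        obtain ⟨k', hk'⟩ := heu v q hq1
        rw [← hk', huk k' (by show σ (e v k') = x; rw [hk']; exact hq2)]
    by_cases hc : ∀ x : Fin n, ∃! k : Fin n, σ (e v k) = x
    · rw [if_pos hc, if_pos (hiff.2 hc)]
      congr 1
      have himg : {pq : Fin M × Fin M |
            pq.1 < pq.2 ∧ t pq.1 = ↑v ∧ t pq.2 = ↑v ∧ σ pq.2 < σ pq.1}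
          = Prod.map (e v) (e v) ''
            {kl : Fin n × Fin n | kl.1 < kl.2 ∧ σ (e v kl.2) < σ (e v kl.1)} := by
        ext pq
        constructor
        · rintro ⟨h1, h2, h3, h4⟩
          obtain ⟨k1, hk1⟩ := heu v pq.1 h2
          obtain ⟨k2, hk2⟩ := heu v pq.2 h3
          refine ⟨(k1, k2), ⟨?_, ?_⟩, ?_⟩
          · exact (he2 v).lt_iff_lt.1 (by rw [hk1, hk2]; exact h1)
          · rw [hk1, hk2]; exact h4
          · simp only [Prod.map, hk1, hk2]
        · rintro ⟨kl, ⟨h1, h2⟩, rfl⟩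
          exact ⟨(he2 v) h1, he1 v kl.1, he1 v kl.2, h2⟩
      rw [himg, Set.ncard_image_of_injective _
        (Function.Injective.prodMap (he2 v).injective (he2 v).injective)]
    · rw [if_neg hc, if_neg (fun h => hc (hiff.1 h))]
  have hbij : Function.Bijective (fun x : Σ _ : Fin K, Fin n => e x.1 x.2) := by
    constructor
    · rintro ⟨v1, k1⟩ ⟨v2, k2⟩ h
      simp only at h
      have hv : v1 = v2 := by
        apply Fin.ext
        rw [← he1 v1 k1, ← he1 v2 k2, h]
      subst hv
      have hk : k1 = k2 := (he2 v1).injective h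
      rw [hk]
    · intro p
      obtain ⟨k, hk⟩ := heu ⟨t p, ht1 p⟩ p rfl
      exact ⟨⟨⟨t p, ht1 p⟩, k⟩, hk⟩
  set E : (Σ _ : Fin K, Fin n) ≃ Fin M := Equiv.ofBijective _ hbij with hEdef
  set W : (∀ _ : Fin K, Fin n → Fin n) ≃ (Fin M → Fin n) :=
    (Equiv.piCurry fun _ _ => Fin n).symm.trans
      (Equiv.arrowCongr E (Equiv.refl (Fin n))) with hWdef
  have hW : ∀ (g : ∀ _ : Fin K, Fin n → Fin n) (v : Fin K) (k : Fin n),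
      W g (e v k) = g v k := by
    intro g v k
    have hE : e v k = E ⟨v, k⟩ := rfl
    rw [hE]
    simp [hWdef, Sigma.uncurry]
  have hprod : ∀ σ : Fin M → Fin n,
      (∏ p, A (σ p) (τ p)) = ∏ v : Fin K, ∏ k : Fin n, A (σ (e v k)) (τ (e v k)) := by
    intro σ
    rw [← Equiv.prod_comp E (fun p => A (σ p) (τ p)), ← Finset.univ_sigma_univ,
      Finset.prod_sigma]
    rfl
  calc ∑ σ : Fin M → Fin n, ((rowSgn M n K t σ : ℤ) : ℂ) * ∏ p, A (σ p) (τ p)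
      = ∑ σ : Fin M → Fin n, ∏ v : Fin K,
          (((blockSgn n (fun k => σ (e v k)) : ℤ) : ℂ) * ∏ k, A (σ (e v k)) (τ (e v k))) := by
        refine Finset.sum_congr rfl fun σ _ => ?_
        rw [hfact σ, hprod σ, Finset.prod_mul_distrib]
        push_cast
        ring
    _ = ∑ g : ∀ _ : Fin K, Fin n → Fin n, ∏ v : Fin K,
          (((blockSgn n (g v) : ℤ) : ℂ) * ∏ k, A (g v k) (τ (e v k))) := by
        refine (Fintype.sum_equiv W _ _ fun g => ?_).symm
        simp only [hW]
    _ = ∏ v : Fin K, ∑ h : Fin n → Fin n,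
          (((blockSgn n h : ℤ) : ℂ) * ∏ k, A (h k) (τ (e v k))) := by
        rw [Fintype.prod_sum]
    _ = ∏ v : Fin K, (A.det * ((blockSgn n (fun k => τ (e v k)) : ℤ) : ℂ)) :=
        Finset.prod_congr rfl fun v _ => det_expansion A _
    _ = A.det ^ K * ((rowSgn M n K t τ : ℤ) : ℂ) := by
        rw [Finset.prod_mul_distrib, Finset.prod_const, Finset.card_univ, Fintype.card_fin,
          hfact τ]
        push_cast
        ring

end DeltaInv

/-- Relative GL-invariance: for `A_i ∈ GL(n_i)` and a balanced table `T`
of degree `M`, `Δ_T((A_1,…,A_d)·X) = det(A_1)^{M/n_1} ⋯ det(A_d)^{M/n_d} · Δ_T(X)`;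
in particular `Δ_T` is invariant under `SL(n_1) × ⋯ × SL(n_d)`. -/
theorem delta_relative_gl_invariance (d M : ℕ) (n : Fin d → ℕ)
    (T : Fin d → Fin M → ℕ) (hT : IsBalanced d M n T)
    (X : ((i : Fin d) → Fin (n i)) → ℂ) :
    (∀ A : (i : Fin d) → Matrix (Fin (n i)) (Fin (n i)) ℂ,
      Delta d M n T
          (fun j => ∑ v : (i : Fin d) → Fin (n i), (∏ i, A i (j i) (v i)) * X v)
        = (∏ i, (A i).det ^ (M / n i)) * Delta d M n T X) ∧
    (∀ A : (i : Fin d) → Matrix (Fin (n i)) (Fin (n i)) ℂ, (∀ i, (A i).det = 1) →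
      Delta d M n T
          (fun j => ∑ v : (i : Fin d) → Fin (n i), (∏ i, A i (j i) (v i)) * X v)
        = Delta d M n T X) := by
  have key : ∀ A : (i : Fin d) → Matrix (Fin (n i)) (Fin (n i)) ℂ,
      Delta d M n T
          (fun j => ∑ v : (i : Fin d) → Fin (n i), (∏ i, A i (j i) (v i)) * X v)
        = (∏ i, (A i).det ^ (M / n i)) * Delta d M n T X := by
    intro A
    classical
    have hinner : ∀ τ : Fin M → ((i : Fin d) → Fin (n i)),
        (∑ σ : (i : Fin d) → Fin M → Fin (n i),
            ((∏ i, rowSgn M (n i) (M / n i) (T i) (σ i) : ℤ) : ℂ) *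
              ∏ p : Fin M, ∏ i, A i (σ i p) (τ p i))
          = ∏ i, ((A i).det ^ (M / n i) *
              ((rowSgn M (n i) (M / n i) (T i) (fun p => τ p i) : ℤ) : ℂ)) := by
      intro τ
      have hsplit : ∀ σ : (i : Fin d) → Fin M → Fin (n i),
          ((∏ i, rowSgn M (n i) (M / n i) (T i) (σ i) : ℤ) : ℂ) *
              ∏ p : Fin M, ∏ i, A i (σ i p) (τ p i)
            = ∏ i, (((rowSgn M (n i) (M / n i) (T i) (σ i) : ℤ) : ℂ) *
                ∏ p : Fin M, A i (σ i p) (τ p i)) := by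
        intro σ
        rw [Finset.prod_comm (f := fun p i => A i (σ i p) (τ p i)),
          Finset.prod_mul_distrib]
        push_cast
        ring
      calc (∑ σ : (i : Fin d) → Fin M → Fin (n i),
            ((∏ i, rowSgn M (n i) (M / n i) (T i) (σ i) : ℤ) : ℂ) *
              ∏ p : Fin M, ∏ i, A i (σ i p) (τ p i))
          = ∑ σ : (i : Fin d) → Fin M → Fin (n i),
              ∏ i, (((rowSgn M (n i) (M / n i) (T i) (σ i) : ℤ) : ℂ) *
                ∏ p : Fin M, A i (σ i p) (τ p i)) :=
            Finset.sum_congr rfl fun σ _ => hsplit σ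
        _ = ∏ i, ∑ s : Fin M → Fin (n i),
              (((rowSgn M (n i) (M / n i) (T i) s : ℤ) : ℂ) *
                ∏ p : Fin M, A i (s p) (τ p i)) := by
            rw [Fintype.prod_sum]
        _ = ∏ i, ((A i).det ^ (M / n i) *
              ((rowSgn M (n i) (M / n i) (T i) (fun p => τ p i) : ℤ) : ℂ)) := by
            refine Finset.prod_congr rfl fun i _ => ?_
            exact DeltaInv.row_lemma M (n i) (M / n i) (T i) (hT i).1 (hT i).2 (A i)
              (fun p => τ p i)
    calc Delta d M n T
          (fun j => ∑ v : (i : Fin d) → Fin (n i), (∏ i, A i (j i) (v i)) * X v)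
        = ∑ σ : (i : Fin d) → Fin M → Fin (n i),
            ∑ τ : Fin M → ((i : Fin d) → Fin (n i)),
              ((∏ i, rowSgn M (n i) (M / n i) (T i) (σ i) : ℤ) : ℂ) *
                ((∏ p : Fin M, ∏ i, A i (σ i p) (τ p i)) * ∏ p : Fin M, X (τ p)) := by
          rw [Delta]
          refine Finset.sum_congr rfl fun σ _ => ?_
          rw [Fintype.prod_sum (f := fun (p : Fin M) (v : (i : Fin d) → Fin (n i)) =>
            (∏ i, A i (σ i p) (v i)) * X v), Finset.mul_sum]
          refine Finset.sum_congr rfl fun τ _ => ?_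
          rw [Finset.prod_mul_distrib]
      _ = ∑ τ : Fin M → ((i : Fin d) → Fin (n i)),
            (∑ σ : (i : Fin d) → Fin M → Fin (n i),
              ((∏ i, rowSgn M (n i) (M / n i) (T i) (σ i) : ℤ) : ℂ) *
                ∏ p : Fin M, ∏ i, A i (σ i p) (τ p i)) * ∏ p : Fin M, X (τ p) := by
          rw [Finset.sum_comm]
          refine Finset.sum_congr rfl fun τ _ => ?_
          rw [Finset.sum_mul]
          refine Finset.sum_congr rfl fun σ _ => ?_
          ring
      _ = ∑ τ : Fin M → ((i : Fin d) → Fin (n i)),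
            ((∏ i, (A i).det ^ (M / n i)) *
              ((∏ i, ((rowSgn M (n i) (M / n i) (T i) (fun p => τ p i) : ℤ) : ℂ)) *
                ∏ p : Fin M, X (τ p))) := by
          refine Finset.sum_congr rfl fun τ _ => ?_
          rw [hinner τ, Finset.prod_mul_distrib]
          ring
      _ = (∏ i, (A i).det ^ (M / n i)) * Delta d M n T X := by
          rw [← Finset.mul_sum, Delta]
          congr 1
          refine Fintype.sum_equiv (Equiv.piComm fun p (i : Fin d) => Fin (n i)) _ _
            fun τ => ?_
          push_cast
          rfl
  exact ⟨key, fun A hA => by rw [key A]; simp [hA]⟩
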